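/- arXiv:1507.08543 — 6 statements merged into one kernel-verified Lean document; each statement's English description precedes it below -/
import Mathlib

section
/- Let d ≥ 4 be an integer and let f = x^{d-1}z + y^d + x^{d-2}yw ∈ ℂ[x,y,z,w]. For every (α, β, γ, δ) ∈ ℂ⁴ with γ ≠ 0, the set of solutions (x,y,z,w) ∈ ℂ⁴ of the system ∂f/∂x = α, ∂f/∂y = β, ∂f/∂z = γ, ∂f/∂w = δ is nonempty and consists of exactly d−1 points, all of which are pairwise proportional (i.e. they all lie on a single line through the origin of ℂ⁴). In particular the fiber of the gradient map over such a point consists of a single point of ℙ³. -/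
open MvPolynomial

lemma aux_card_pow_roots (n : ℕ) (hn : 0 < n) (γ : ℂ) (hγ : γ ≠ 0) :
    Set.ncard {x : ℂ | x ^ n = γ} = n := by
  have hζ := Complex.isPrimitiveRoot_exp n hn.ne'
  have hset : {x : ℂ | x ^ n = γ} = ↑(Polynomial.nthRoots n γ).toFinset := by
    ext x; simp [Polynomial.mem_nthRoots hn]
  rw [hset, Set.ncard_coe_finset, Multiset.toFinset_card_of_nodup (hζ.nthRoots_nodup hγ),
    hζ.card_nthRoots, if_pos (IsAlgClosed.exists_pow_nat_eq γ hn)]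

/-- The surface `D''_d : x^{d-1}z + y^d + x^{d-2}yw = 0` is homaloidal: for every point
`(α,β,γ,δ)` with `γ ≠ 0`, the fiber of the gradient map consists of exactly `d-1` points
of `ℂ⁴`, all pairwise proportional (hence a single point of `ℙ³`). -/
theorem stmt0 (d : ℕ) (hd : 4 ≤ d)
    (f : MvPolynomial (Fin 4) ℂ)
    (hf : f = X 0 ^ (d - 1) * X 2 + X 1 ^ d + X 0 ^ (d - 2) * X 1 * X 3)
    (α β γ δ : ℂ) (hγ : γ ≠ 0)
    (Sol : Set (Fin 4 → ℂ))
    (hSol : Sol = {p | eval p (pderiv 0 f) = α ∧ eval p (pderiv 1 f) = β ∧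
        eval p (pderiv 2 f) = γ ∧ eval p (pderiv 3 f) = δ}) :
    Sol.Nonempty ∧ Sol.ncard = d - 1 ∧
      ∀ p ∈ Sol, ∀ q ∈ Sol, ∃ c : ℂ, c ≠ 0 ∧ q = c • p := by
  subst hf
  have h1 : d - 1 - 1 = d - 2 := by omega
  have h2 : d - 2 - 1 = d - 3 := by omega
  have hp1 : d - 1 = (d - 2) + 1 := by omega
  have hp2 : d - 1 = (d - 3) + 2 := by omega
  have cast1 : ((d - 1 : ℕ) : ℂ) = (d : ℂ) - 1 := by
    rw [Nat.cast_sub (by omega : 1 ≤ d), Nat.cast_one]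
  have cast2 : ((d - 2 : ℕ) : ℂ) = (d : ℂ) - 2 := by
    rw [Nat.cast_sub (by omega : 2 ≤ d), Nat.cast_ofNat]
  have hd1' : (d : ℂ) - 1 ≠ 0 := by
    rw [sub_ne_zero]
    intro h
    rw [← Nat.cast_one] at h
    have := Nat.cast_inj (R := ℂ).mp h
    omega
  -- constants
  obtain ⟨a, ha⟩ : ∃ a : ℂ, a = δ / γ := ⟨_, rfl⟩
  obtain ⟨b, hb⟩ : ∃ b : ℂ, b = (β - (d : ℂ) * a ^ (d - 1) * γ) / γ := ⟨_, rfl⟩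
  obtain ⟨cc, hcc⟩ : ∃ cc : ℂ, cc = (α / γ - ((d : ℂ) - 2) * a * b) / ((d : ℂ) - 1) := ⟨_, rfl⟩
  obtain ⟨v, hv⟩ : ∃ v : Fin 4 → ℂ, v = ![1, a, cc, b] := ⟨_, rfl⟩
  have hA : γ * a = δ := by rw [ha]; field_simp
  have hB : γ * b = β - (d : ℂ) * a ^ (d - 1) * γ := by rw [hb]; field_simp
  have hC : ((d : ℂ) - 1) * γ * cc = α - ((d : ℂ) - 2) * γ * a * b := by
    rw [hcc]; field_simp
  -- evaluations of the partial derivatives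
  have E0 : ∀ p : Fin 4 → ℂ,
      eval p (pderiv 0 (X 0 ^ (d-1) * X 2 + X 1 ^ d + X 0 ^ (d-2) * X 1 * X 3 : MvPolynomial (Fin 4) ℂ))
        = ((d-1 : ℕ) : ℂ) * p 0 ^ (d-2) * p 2 + ((d-2 : ℕ) : ℂ) * p 0 ^ (d-3) * p 1 * p 3 := by
    intro p; simp [pderiv_mul, pderiv_pow, pderiv_X, h1, h2]; ring
  have E1 : ∀ p : Fin 4 → ℂ,
      eval p (pderiv 1 (X 0 ^ (d-1) * X 2 + X 1 ^ d + X 0 ^ (d-2) * X 1 * X 3 : MvPolynomial (Fin 4) ℂ))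
        = (d : ℂ) * p 1 ^ (d-1) + p 0 ^ (d-2) * p 3 := by
    intro p; simp [pderiv_mul, pderiv_pow, pderiv_X]; ring
  have E2 : ∀ p : Fin 4 → ℂ,
      eval p (pderiv 2 (X 0 ^ (d-1) * X 2 + X 1 ^ d + X 0 ^ (d-2) * X 1 * X 3 : MvPolynomial (Fin 4) ℂ))
        = p 0 ^ (d-1) := by
    intro p; simp [pderiv_mul, pderiv_pow, pderiv_X]
  have E3 : ∀ p : Fin 4 → ℂ,
      eval p (pderiv 3 (X 0 ^ (d-1) * X 2 + X 1 ^ d + X 0 ^ (d-2) * X 1 * X 3 : MvPolynomial (Fin 4) ℂ))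
        = p 0 ^ (d-2) * p 1 := by
    intro p; simp [pderiv_mul, pderiv_pow, pderiv_X]
  -- key characterization
  have key : ∀ p : Fin 4 → ℂ, p ∈ Sol ↔ (p 0 ^ (d-1) = γ ∧ p = p 0 • v) := by
    intro p
    rw [hSol]
    simp only [Set.mem_setOf_eq, E0 p, E1 p, E2 p, E3 p, cast1, cast2]
    constructor
    · rintro ⟨e0, e1, e2, e3⟩
      have hx : p 0 ≠ 0 := by
        intro h; rw [h, zero_pow (by omega)] at e2; exact hγ e2.symm
      have hX1 : p 0 ^ (d - 2) * p 0 = γ := by rw [← pow_succ, ← hp1, e2]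
      have hX2 : p 0 ^ (d - 3) * p 0 ^ 2 = γ := by rw [← pow_add, ← hp2, e2]
      have hy : p 1 = a * p 0 := by
        apply mul_left_cancel₀ hγ
        linear_combination p 0 * e3 - p 1 * hX1 - p 0 * hA
      have hyp : p 1 ^ (d - 1) = a ^ (d - 1) * γ := by rw [hy, mul_pow, e2]
      have hw : p 3 = b * p 0 := by
        apply mul_left_cancel₀ hγ
        linear_combination p 0 * e1 - p 3 * hX1 - (d : ℂ) * p 0 * hyp - p 0 * hB
      have hz : p 2 = cc * p 0 := by
        apply mul_left_cancel₀ (mul_ne_zero (mul_ne_zero hd1' hγ) hx)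
        linear_combination p 0 ^ 2 * e0 - ((d : ℂ) - 1) * p 2 * p 0 * hX1
          - ((d : ℂ) - 2) * p 1 * p 3 * hX2 - ((d : ℂ) - 2) * γ * p 3 * hy
          - ((d : ℂ) - 2) * γ * a * p 0 * hw - p 0 ^ 2 * hC
      refine ⟨e2, ?_⟩
      funext i
      fin_cases i <;> simp [hv, hy, hz, hw] <;> ring
    · rintro ⟨e2, hpv⟩
      have hx : p 0 ≠ 0 := by
        intro h; rw [h, zero_pow (by omega)] at e2; exact hγ e2.symm
      have hX1 : p 0 ^ (d - 2) * p 0 = γ := by rw [← pow_succ, ← hp1, e2]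
      have hX2 : p 0 ^ (d - 3) * p 0 ^ 2 = γ := by rw [← pow_add, ← hp2, e2]
      have hpi : ∀ i, p i = p 0 * v i := fun i => by nth_rewrite 1 [hpv]; rfl
      rw [hpi 1, hpi 2, hpi 3]
      simp only [hv, Matrix.cons_val_one, Matrix.cons_val_zero, Matrix.head_cons, Matrix.cons_val_two,
        Matrix.tail_cons, Matrix.cons_val_three]
      refine ⟨?_, ?_, e2, ?_⟩
      · linear_combination ((d : ℂ) - 1) * cc * hX1 + ((d : ℂ) - 2) * a * b * hX2 + hC
      · linear_combination (d : ℂ) * a ^ (d - 1) * e2 + b * hX1 + hB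
      · linear_combination a * hX1 + hA
  -- Sol as an image
  have himg : Sol = (fun x : ℂ => x • v) '' {x : ℂ | x ^ (d - 1) = γ} := by
    ext p
    rw [key p]
    constructor
    · rintro ⟨h1', h2'⟩; exact ⟨p 0, h1', h2'.symm⟩
    · rintro ⟨x, hx', rfl⟩
      show (x • v) 0 ^ (d - 1) = γ ∧ x • v = (x • v) 0 • v
      have hv0 : (x • v) 0 = x := by simp [hv]
      rw [hv0]
      exact ⟨hx', rfl⟩
  have hinj : Set.InjOn (fun x : ℂ => x • v) {x : ℂ | x ^ (d - 1) = γ} := by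
    intro x1 _ x2 _ h
    have := congrFun h 0
    simpa [hv] using this
  obtain ⟨x₀, hx₀⟩ := IsAlgClosed.exists_pow_nat_eq (k := ℂ) γ (n := d - 1) (by omega)
  refine ⟨⟨x₀ • v, ?_⟩, ?_, ?_⟩
  · rw [key]
    have hv0 : (x₀ • v) 0 = x₀ := by simp [hv]
    rw [hv0]
    exact ⟨hx₀, rfl⟩
  · rw [himg, Set.ncard_image_of_injOn hinj, aux_card_pow_roots (d - 1) (by omega) γ hγ]
  · intro p hp q hq
    rw [key] at hp hq
    obtain ⟨hp1', hp2'⟩ := hp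
    obtain ⟨hq1', hq2'⟩ := hq
    have hpx : p 0 ≠ 0 := by
      intro h; rw [h, zero_pow (by omega)] at hp1'; exact hγ hp1'.symm
    have hqx : q 0 ≠ 0 := by
      intro h; rw [h, zero_pow (by omega)] at hq1'; exact hγ hq1'.symm
    refine ⟨q 0 / p 0, div_ne_zero hqx hpx, ?_⟩
    rw [hq2', hp2']
    funext i
    have hv0 : v 0 = 1 := by simp [hv]
    simp only [Pi.smul_apply, smul_eq_mul, hv0, mul_one]
    field_simp
end

section
/- Let d ≥ 4 be an integer and let f = x^{d-1}z + y^d + x^{d-2}yw + x⁴y^{d-4} ∈ ℂ[x,y,z,w]. For every (α, β, γ, δ) ∈ ℂ⁴ with γ ≠ 0, the solutions (x,y,z,w) ∈ ℂ⁴ of ∂f/∂x = α, ∂f/∂y = β, ∂f/∂z = γ, ∂f/∂w = δ form a nonempty set all of whose elements are pairwise proportional. -/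
open MvPolynomial

lemma stmt1_key (e : ℕ) (p : Fin 4 → ℂ)
    (f : MvPolynomial (Fin 4) ℂ)
    (hf : f = X 0 ^ (e + 3) * X 2 + X 1 ^ (e + 4) + X 0 ^ (e + 2) * X 1 * X 3 +
        X 0 ^ 4 * X 1 ^ e) :
    eval p (pderiv 0 f) = (e+3) * p 0 ^ (e+2) * p 2 + (e+2) * p 0 ^ (e+1) * p 1 * p 3
       + 4 * p 0 ^ 3 * p 1 ^ e ∧
    eval p (pderiv 1 f) = (e+4) * p 1 ^ (e+3) + p 0 ^ (e+2) * p 3 + e * p 0 ^ 4 * p 1 ^ (e-1) ∧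
    eval p (pderiv 2 f) = p 0 ^ (e+3) ∧
    eval p (pderiv 3 f) = p 0 ^ (e+2) * p 1 := by
  subst hf
  refine ⟨?_, ?_, ?_, ?_⟩ <;>
    simp (config := { decide := true }) [pderiv_mul, pderiv_pow, pderiv_X_self, pderiv_X_of_ne, Pi.single_apply]
  all_goals ring

/-- The surface `D_d : x^{d-1}z + y^d + x^{d-2}yw + x⁴y^{d-4} = 0` is homaloidal. -/
theorem stmt1 (d : ℕ) (hd : 4 ≤ d)
    (f : MvPolynomial (Fin 4) ℂ)
    (hf : f = X 0 ^ (d - 1) * X 2 + X 1 ^ d + X 0 ^ (d - 2) * X 1 * X 3 +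
        X 0 ^ 4 * X 1 ^ (d - 4))
    (α β γ δ : ℂ) (hγ : γ ≠ 0)
    (Sol : Set (Fin 4 → ℂ))
    (hSol : Sol = {p | eval p (pderiv 0 f) = α ∧ eval p (pderiv 1 f) = β ∧
        eval p (pderiv 2 f) = γ ∧ eval p (pderiv 3 f) = δ}) :
    Sol.Nonempty ∧ ∀ p ∈ Sol, ∀ q ∈ Sol, ∃ c : ℂ, c ≠ 0 ∧ q = c • p := by
  obtain ⟨e, rfl⟩ : ∃ e, d = e + 4 := ⟨d - 4, by omega⟩
  have hf' : f = X 0 ^ (e + 3) * X 2 + X 1 ^ (e + 4) + X 0 ^ (e + 2) * X 1 * X 3 +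
      X 0 ^ 4 * X 1 ^ e := by
    rw [hf, show e + 4 - 1 = e + 3 by omega, show e + 4 - 2 = e + 2 by omega,
      show e + 4 - 4 = e by omega]
  have key := fun p => stmt1_key e p f hf'
  have hmem : ∀ p : Fin 4 → ℂ, p ∈ Sol ↔
      ((e:ℂ)+3) * p 0 ^ (e+2) * p 2 + ((e:ℂ)+2) * p 0 ^ (e+1) * p 1 * p 3
        + 4 * p 0 ^ 3 * p 1 ^ e = α ∧
      ((e:ℂ)+4) * p 1 ^ (e+3) + p 0 ^ (e+2) * p 3 + (e:ℂ) * p 0 ^ 4 * p 1 ^ (e-1) = β ∧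
      p 0 ^ (e+3) = γ ∧
      p 0 ^ (e+2) * p 1 = δ := by
    intro p
    obtain ⟨k1, k2, k3, k4⟩ := key p
    rw [hSol]
    simp only [Set.mem_setOf_eq, k1, k2, k3, k4]
  have he3 : ((e:ℂ) + 3) ≠ 0 := by
    intro h
    have h2 : ((e + 3 : ℕ) : ℂ) = 0 := by push_cast; linear_combination h
    rw [Nat.cast_eq_zero] at h2
    omega
  constructor
  · -- Nonempty
    obtain ⟨x, hx⟩ : ∃ x : ℂ, x ^ (e + 3) = γ := by
      rcases Complex.isAlgClosed.exists_pow_nat_eq γ (n := e + 3) (by omega) with ⟨x, hx⟩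
      exact ⟨x, hx⟩
    have hx0 : x ≠ 0 := by
      intro h; apply hγ; rw [← hx, h]; simp
    set y : ℂ := δ / x ^ (e + 2) with hy
    set w : ℂ := (β - ((e:ℂ)+4) * y ^ (e+3) - (e:ℂ) * x^4 * y^(e-1)) / x ^ (e+2) with hw
    set z : ℂ := (α - ((e:ℂ)+2) * x^(e+1) * y * w - 4 * x^3 * y^e) / (((e:ℂ)+3) * x^(e+2)) with hz
    refine ⟨![x, y, z, w], (hmem _).mpr ?_⟩
    simp only [Matrix.cons_val_zero, Matrix.cons_val_one, Matrix.head_cons,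
      Matrix.cons_val_two, Matrix.tail_cons, Matrix.cons_val_three]
    refine ⟨?_, ?_, hx, ?_⟩
    · rw [hz]; field_simp; ring
    · rw [hw]; field_simp; ring
    · rw [hy]; field_simp
  · -- proportionality
    intro p hp q hq
    obtain ⟨hA, hB, hG, hD⟩ := (hmem p).mp hp
    obtain ⟨hA', hB', hG', hD'⟩ := (hmem q).mp hq
    have hp0 : p 0 ≠ 0 := by
      intro h; apply hγ; rw [← hG, h]; simp
    have hq0 : q 0 ≠ 0 := by
      intro h; apply hγ; rw [← hG', h]; simp
    set c : ℂ := q 0 / p 0 with hcdef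
    have hc0 : c ≠ 0 := div_ne_zero hq0 hp0
    have hc : q 0 = c * p 0 := by rw [hcdef]; field_simp
    have hC : c ^ (e + 3) = 1 := by
      rw [hcdef, div_pow, hG', hG, div_self hγ]
    have hpow : p 0 ^ (e + 2) ≠ 0 := pow_ne_zero _ hp0
    -- y coordinate
    have hy : q 1 = c * p 1 := by
      have hD2 : (c * p 0) ^ (e+2) * q 1 = δ := by rw [← hc]; exact hD'
      have step : p 0 ^ (e+2) * q 1 = p 0 ^ (e+2) * (c * p 1) := by
        linear_combination c * hD2 - c * hD - p 0 ^ (e+2) * q 1 * hC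
      exact mul_left_cancel₀ hpow step
    -- w coordinate
    have hw : q 3 = c * p 3 := by
      have hB2 : ((e:ℂ)+4) * (c * p 1) ^ (e+3) + (c * p 0) ^ (e+2) * q 3
          + (e:ℂ) * (c * p 0) ^ 4 * (c * p 1) ^ (e-1) = β := by
        rw [← hc, ← hy]; exact hB'
      have hterm : (e:ℂ) * (c * p 0) ^ 4 * (c * p 1) ^ (e-1)
          = (e:ℂ) * p 0 ^ 4 * p 1 ^ (e-1) * c ^ (e+3) := by
        rcases e with _ | k
        · simp
        · simp only [Nat.add_sub_cancel]
          push_cast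
          ring
      have step : p 0 ^ (e+2) * q 3 = p 0 ^ (e+2) * (c * p 3) := by
        linear_combination c * hB2 - c * hB - c * hterm
          - (c * ((e:ℂ)+4) * p 1 ^ (e+3) + c * (e:ℂ) * p 0 ^ 4 * p 1 ^ (e-1)
             + p 0 ^ (e+2) * q 3) * hC
      exact mul_left_cancel₀ hpow step
    -- z coordinate
    have hz : q 2 = c * p 2 := by
      have hA2 : ((e:ℂ)+3) * (c * p 0) ^ (e+2) * q 2
          + ((e:ℂ)+2) * (c * p 0) ^ (e+1) * (c * p 1) * (c * p 3)
          + 4 * (c * p 0) ^ 3 * (c * p 1) ^ e = α := by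
        rw [← hc, ← hy, ← hw]; exact hA'
      have step : (((e:ℂ)+3) * p 0 ^ (e+2)) * q 2 = (((e:ℂ)+3) * p 0 ^ (e+2)) * (c * p 2) := by
        linear_combination c * hA2 - c * hA
          - (((e:ℂ)+3) * p 0 ^ (e+2) * q 2 + c * ((e:ℂ)+2) * p 0 ^ (e+1) * p 1 * p 3
             + 4 * c * p 0 ^ 3 * p 1 ^ e) * hC
      exact mul_left_cancel₀ (mul_ne_zero he3 hpow) step
    refine ⟨c, hc0, ?_⟩
    funext i
    fin_cases i <;> simp [hc, hy, hz, hw]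
end

section
/- Let d ≥ 5 be an integer and let f = x^{d-1}z + y^d + x^{d-2}yw + x^{d-5}y⁵ ∈ ℂ[x,y,z,w]. For every (α, β, γ, δ) ∈ ℂ⁴ with γ ≠ 0, the solutions (x,y,z,w) ∈ ℂ⁴ of the system (∂f/∂x, ∂f/∂y, ∂f/∂z, ∂f/∂w) = (α, β, γ, δ) form a nonempty set all of whose elements are pairwise proportional. -/
open MvPolynomial

/-- The surface `D'_d : x^{d-1}z + y^d + x^{d-2}yw + x^{d-5}y⁵ = 0` is homaloidal. -/
theorem stmt2 (d : ℕ) (hd : 5 ≤ d)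
    (f : MvPolynomial (Fin 4) ℂ)
    (hf : f = X 0 ^ (d - 1) * X 2 + X 1 ^ d + X 0 ^ (d - 2) * X 1 * X 3 +
        X 0 ^ (d - 5) * X 1 ^ 5)
    (α β γ δ : ℂ) (hγ : γ ≠ 0)
    (Sol : Set (Fin 4 → ℂ))
    (hSol : Sol = {p | eval p (pderiv 0 f) = α ∧ eval p (pderiv 1 f) = β ∧
        eval p (pderiv 2 f) = γ ∧ eval p (pderiv 3 f) = δ}) :
    Sol.Nonempty ∧ ∀ p ∈ Sol, ∀ q ∈ Sol, ∃ c : ℂ, c ≠ 0 ∧ q = c • p := by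
  obtain ⟨e, rfl⟩ : ∃ e, d = e + 5 := ⟨d - 5, by omega⟩
  have hf' : f = X 0 ^ (e+4) * X 2 + X 1 ^ (e+5) + X 0 ^ (e+3) * X 1 * X 3 +
      X 0 ^ e * X 1 ^ 5 := hf
  have h0 : ∀ p : Fin 4 → ℂ, eval p (pderiv 0 f)
      = (e+4) * p 0 ^ (e+3) * p 2 + (e+3) * p 0 ^ (e+2) * p 1 * p 3
        + e * p 0 ^ (e-1) * p 1 ^ 5 := by
    intro p; rw [hf']; simp [pderiv_mul, pderiv_pow, pderiv_X]; ring
  have h1 : ∀ p : Fin 4 → ℂ, eval p (pderiv 1 f)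
      = (e+5) * p 1 ^ (e+4) + p 0 ^ (e+3) * p 3 + 5 * p 0 ^ e * p 1 ^ 4 := by
    intro p; rw [hf']; simp [pderiv_mul, pderiv_pow, pderiv_X]; ring
  have h2 : ∀ p : Fin 4 → ℂ, eval p (pderiv 2 f) = p 0 ^ (e+4) := by
    intro p; rw [hf']; simp [pderiv_mul, pderiv_pow, pderiv_X]
  have h3 : ∀ p : Fin 4 → ℂ, eval p (pderiv 3 f) = p 0 ^ (e+3) * p 1 := by
    intro p; rw [hf']; simp [pderiv_mul, pderiv_pow, pderiv_X]
  have hc4 : ((e : ℂ) + 4) ≠ 0 := by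
    have : ((e + 4 : ℕ) : ℂ) ≠ 0 := Nat.cast_ne_zero.mpr (by omega)
    push_cast at this; exact this
  constructor
  · -- nonemptiness
    obtain ⟨x, hx⟩ := IsAlgClosed.exists_pow_nat_eq γ (n := e + 4) (by omega)
    have hx0 : x ≠ 0 := by rintro rfl; exact hγ (by simpa using hx.symm)
    set y : ℂ := δ / x ^ (e+3) with hy
    set w : ℂ := (β - (e+5) * y ^ (e+4) - 5 * x ^ e * y ^ 4) / x ^ (e+3) with hw
    set z : ℂ := (α - (e+3) * x ^ (e+2) * y * w - e * x ^ (e-1) * y ^ 5)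
        / ((e+4) * x ^ (e+3)) with hz
    refine ⟨![x, y, z, w], ?_⟩
    rw [hSol]
    refine ⟨?_, ?_, ?_, ?_⟩
    · rw [h0]; simp only [Matrix.cons_val_zero, Matrix.cons_val_one, Matrix.head_cons,
        Matrix.cons_val_two, Matrix.tail_cons, Matrix.cons_val_three]
      rw [hz]; field_simp; ring
    · rw [h1]; simp only [Matrix.cons_val_zero, Matrix.cons_val_one, Matrix.head_cons,
        Matrix.cons_val_two, Matrix.tail_cons, Matrix.cons_val_three]
      rw [hw]; field_simp; ring
    · rw [h2]; simpa using hx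
    · rw [h3]; simp only [Matrix.cons_val_zero, Matrix.cons_val_one, Matrix.head_cons]
      rw [hy]; field_simp
  · -- proportionality
    intro p hp q hq
    rw [hSol] at hp hq
    obtain ⟨hpα, hpβ, hpγ, hpδ⟩ := hp
    obtain ⟨hqα, hqβ, hqγ, hqδ⟩ := hq
    rw [h0 p] at hpα; rw [h1 p] at hpβ; rw [h2 p] at hpγ; rw [h3 p] at hpδ
    rw [h0 q] at hqα; rw [h1 q] at hqβ; rw [h2 q] at hqγ; rw [h3 q] at hqδ
    have hp0 : p 0 ≠ 0 := by rintro h; rw [h] at hpγ; exact hγ (by simpa using hpγ.symm)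
    have hq0 : q 0 ≠ 0 := by rintro h; rw [h] at hqγ; exact hγ (by simpa using hqγ.symm)
    set c : ℂ := q 0 / p 0 with hc
    have hcne : c ≠ 0 := div_ne_zero hq0 hp0
    have hce : c ^ (e+4) = 1 := by
      rw [hc, div_pow, hqγ, hpγ, div_self hγ]
    have hq0c : q 0 = c * p 0 := by rw [hc]; field_simp
    have hq1 : q 1 = c * p 1 := by
      apply mul_left_cancel₀ (pow_ne_zero (e+3) hq0)
      calc q 0 ^ (e+3) * q 1 = δ := hqδ
        _ = p 0 ^ (e+3) * p 1 := hpδ.symm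
        _ = (p 0 ^ (e+4) * p 1) / p 0 := by field_simp; ring
        _ = (q 0 ^ (e+4) * p 1) / p 0 := by rw [hpγ, hqγ]
        _ = q 0 ^ (e+3) * (c * p 1) := by rw [hc]; field_simp; ring
    have key3 : q 0 ^ (e+3) * q 3 = p 0 ^ (e+3) * p 3 := by
      have e1 : q 1 ^ (e+4) = p 1 ^ (e+4) := by
        rw [hq1, mul_pow, hce, one_mul]
      have e2 : q 0 ^ e * q 1 ^ 4 = p 0 ^ e * p 1 ^ 4 := by
        have : q 0 ^ e * q 1 ^ 4 = c ^ (e+4) * (p 0 ^ e * p 1 ^ 4) := by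
          rw [hq0c, hq1]; ring
        rw [this, hce, one_mul]
      linear_combination hqβ - hpβ - ((e:ℂ)+5) * e1 - 5 * e2
    have hq3 : q 3 = c * p 3 := by
      apply mul_left_cancel₀ (pow_ne_zero (e+3) hq0)
      calc q 0 ^ (e+3) * q 3 = p 0 ^ (e+3) * p 3 := key3
        _ = (p 0 ^ (e+4) * p 3) / p 0 := by field_simp; ring
        _ = (q 0 ^ (e+4) * p 3) / p 0 := by rw [hpγ, hqγ]
        _ = q 0 ^ (e+3) * (c * p 3) := by rw [hc]; field_simp; ring
    have key2 : q 0 ^ (e+3) * q 2 = p 0 ^ (e+3) * p 2 := by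
      have e1 : q 0 ^ (e+2) * q 1 * q 3 = p 0 ^ (e+2) * p 1 * p 3 := by
        have : q 0 ^ (e+2) * q 1 * q 3 = c ^ (e+4) * (p 0 ^ (e+2) * p 1 * p 3) := by
          rw [hq0c, hq1, hq3]; ring
        rw [this, hce, one_mul]
      have e2 : (e : ℂ) * q 0 ^ (e-1) * q 1 ^ 5 = (e : ℂ) * p 0 ^ (e-1) * p 1 ^ 5 := by
        rcases Nat.eq_zero_or_pos e with he | he
        · subst he; simp
        · obtain ⟨k, rfl⟩ : ∃ k, e = k + 1 := ⟨e - 1, by omega⟩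
          have h5 : q 0 ^ k * q 1 ^ 5 = p 0 ^ k * p 1 ^ 5 := by
            have h6 : q 0 ^ k * q 1 ^ 5 = c ^ (k+1+4) * (p 0 ^ k * p 1 ^ 5) := by
              rw [hq0c, hq1]; ring
            rw [h6, hce, one_mul]
          simp only [Nat.add_sub_cancel]
          linear_combination (norm := (push_cast; ring1)) ((k:ℂ)+1) * h5
      have h4 : ((e:ℂ)+4) * (q 0 ^ (e+3) * q 2) = ((e:ℂ)+4) * (p 0 ^ (e+3) * p 2) := by
        linear_combination hqα - hpα - ((e:ℂ)+3) * e1 - e2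
      exact mul_left_cancel₀ hc4 h4
    have hq2 : q 2 = c * p 2 := by
      apply mul_left_cancel₀ (pow_ne_zero (e+3) hq0)
      calc q 0 ^ (e+3) * q 2 = p 0 ^ (e+3) * p 2 := key2
        _ = (p 0 ^ (e+4) * p 2) / p 0 := by field_simp; ring
        _ = (q 0 ^ (e+4) * p 2) / p 0 := by rw [hpγ, hqγ]
        _ = q 0 ^ (e+3) * (c * p 2) := by rw [hc]; field_simp; ring
    refine ⟨c, hcne, ?_⟩
    funext i
    fin_cases i <;> simp [hq0c, hq1, hq2, hq3]
end

section
/- Let d ≥ 5 be an integer and let f = x^{d-1}z + y^d + x^{d-2}yw + xy^{d-1} ∈ ℂ[x,y,z,w]. For every (α, β, γ, δ) ∈ ℂ⁴ with γ ≠ 0, the solutions (x,y,z,w) ∈ ℂ⁴ of the system (∂f/∂x, ∂f/∂y, ∂f/∂z, ∂f/∂w) = (α, β, γ, δ) form a nonempty set all of whose elements are pairwise proportional. -/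
open MvPolynomial

/-- The surface `D'''_d : x^{d-1}z + y^d + x^{d-2}yw + xy^{d-1} = 0` is homaloidal. -/
theorem stmt3 (d : ℕ) (hd : 5 ≤ d)
    (f : MvPolynomial (Fin 4) ℂ)
    (hf : f = X 0 ^ (d - 1) * X 2 + X 1 ^ d + X 0 ^ (d - 2) * X 1 * X 3 +
        X 0 * X 1 ^ (d - 1))
    (α β γ δ : ℂ) (hγ : γ ≠ 0)
    (Sol : Set (Fin 4 → ℂ))
    (hSol : Sol = {p | eval p (pderiv 0 f) = α ∧ eval p (pderiv 1 f) = β ∧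
        eval p (pderiv 2 f) = γ ∧ eval p (pderiv 3 f) = δ}) :
    Sol.Nonempty ∧ ∀ p ∈ Sol, ∀ q ∈ Sol, ∃ c : ℂ, c ≠ 0 ∧ q = c • p := by
  obtain ⟨e, rfl⟩ : ∃ e, d = e + 5 := ⟨d - 5, by omega⟩
  subst hf hSol
  have he4 : ((e : ℂ) + 4) ≠ 0 := by
    have : ((e + 4 : ℕ) : ℂ) ≠ 0 := Nat.cast_ne_zero.2 (by omega)
    push_cast at this; exact this
  -- characterize membership
  have hmem : ∀ p : Fin 4 → ℂ,
      (p ∈ {p : Fin 4 → ℂ | eval p (pderiv 0 ((X 0 ^ (e+5 - 1) * X 2 + X 1 ^ (e+5) +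
          X 0 ^ (e+5 - 2) * X 1 * X 3 + X 0 * X 1 ^ (e+5 - 1) : MvPolynomial (Fin 4) ℂ))) = α ∧
        eval p (pderiv 1 ((X 0 ^ (e+5 - 1) * X 2 + X 1 ^ (e+5) +
          X 0 ^ (e+5 - 2) * X 1 * X 3 + X 0 * X 1 ^ (e+5 - 1) : MvPolynomial (Fin 4) ℂ))) = β ∧
        eval p (pderiv 2 ((X 0 ^ (e+5 - 1) * X 2 + X 1 ^ (e+5) +
          X 0 ^ (e+5 - 2) * X 1 * X 3 + X 0 * X 1 ^ (e+5 - 1) : MvPolynomial (Fin 4) ℂ))) = γ ∧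
        eval p (pderiv 3 ((X 0 ^ (e+5 - 1) * X 2 + X 1 ^ (e+5) +
          X 0 ^ (e+5 - 2) * X 1 * X 3 + X 0 * X 1 ^ (e+5 - 1) : MvPolynomial (Fin 4) ℂ))) = δ})
      ↔ (((e:ℂ)+4) * p 0 ^ (e+3) * p 2 + ((e:ℂ)+3) * p 0 ^ (e+2) * p 1 * p 3
            + p 1 ^ (e+4) = α ∧
          ((e:ℂ)+5) * p 1 ^ (e+4) + p 0 ^ (e+3) * p 3 + ((e:ℂ)+4) * p 0 * p 1 ^ (e+3) = β ∧
          p 0 ^ (e+4) = γ ∧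
          p 0 ^ (e+3) * p 1 = δ) := by
    intro p
    simp only [Set.mem_setOf_eq]
    simp only [pderiv_mul, pderiv_pow, pderiv_X, map_add, map_mul, eval_add, eval_mul, eval_pow,
      eval_X, smul_eq_mul, map_pow, map_natCast, map_ofNat, map_one, Pi.single_apply,
      show ((1:Fin 4) = 0) = False by simp, show ((2:Fin 4) = 0) = False by simp,
      show ((3:Fin 4) = 0) = False by simp, show ((0:Fin 4) = 0) = True by simp,
      show ((0:Fin 4) = 1) = False by simp, show ((2:Fin 4) = 1) = False by simp,
      show ((3:Fin 4) = 1) = False by simp, show ((1:Fin 4) = 1) = True by simp,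
      show ((0:Fin 4) = 2) = False by simp, show ((1:Fin 4) = 2) = False by simp,
      show ((3:Fin 4) = 2) = False by simp, show ((2:Fin 4) = 2) = True by simp,
      show ((0:Fin 4) = 3) = False by simp, show ((1:Fin 4) = 3) = False by simp,
      show ((2:Fin 4) = 3) = False by simp, show ((3:Fin 4) = 3) = True by simp,
      if_true, if_false, eval_zero, mul_zero, zero_mul, add_zero, zero_add, mul_one, one_mul]
    simp only [show e+5-1 = e+4 from rfl, show e+5-2 = e+3 from rfl, show e+5-1-1 = e+3 from rfl,
      show e+5-2-1 = e+2 from rfl]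
    push_cast
    constructor <;> rintro ⟨h1, h2, h3, h4⟩ <;>
      exact ⟨by linear_combination h1, by linear_combination h2, by linear_combination h3,
        by linear_combination h4⟩
  constructor
  · -- existence
    obtain ⟨x, hx⟩ := IsAlgClosed.exists_pow_nat_eq (k := ℂ) γ (n := e + 4) (by omega)
    have hx0 : x ≠ 0 := by
      intro h; exact hγ (by rw [← hx, h, zero_pow (by omega)])
    set y : ℂ := δ / x ^ (e+3) with hy
    set w : ℂ := (β - ((e:ℂ)+5) * y ^ (e+4) - ((e:ℂ)+4) * x * y ^ (e+3)) / x ^ (e+3) with hw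
    set z : ℂ := (α - ((e:ℂ)+3) * x ^ (e+2) * y * w - y ^ (e+4)) / (((e:ℂ)+4) * x ^ (e+3))
      with hz
    refine ⟨![x, y, z, w], (hmem _).2 ⟨?_, ?_, ?_, ?_⟩⟩ <;>
      simp only [Matrix.cons_val_zero, Matrix.cons_val_one, Matrix.head_cons,
        Matrix.cons_val_two, Matrix.tail_cons, Matrix.cons_val_three]
    · rw [hz]; field_simp; ring
    · rw [hw]; field_simp; ring
    · exact hx
    · rw [hy]; field_simp
  · -- proportionality
    intro p hp q hq
    obtain ⟨hp1, hp2, hp3, hp4⟩ := (hmem p).1 hp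
    obtain ⟨hq1, hq2, hq3, hq4⟩ := (hmem q).1 hq
    have hp0 : p 0 ≠ 0 := by
      intro h; exact hγ (by rw [← hp3, h, zero_pow (by omega)])
    have hq0 : q 0 ≠ 0 := by
      intro h; exact hγ (by rw [← hq3, h, zero_pow (by omega)])
    set c : ℂ := q 0 / p 0 with hc
    have hcne : c ≠ 0 := div_ne_zero hq0 hp0
    have hpow : q 0 ^ (e+4) = p 0 ^ (e+4) := by rw [hp3, hq3]
    have hcp : c ^ (e+4) = 1 := by
      rw [hc, div_pow, hpow, div_self (pow_ne_zero _ hp0)]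
    have hq0eq : q 0 = c * p 0 := (div_mul_cancel₀ (q 0) hp0).symm
    -- q 1 = c * p 1
    have h1 : p 0 * q 1 = q 0 * p 1 := by
      refine mul_left_cancel₀ (pow_ne_zero (e+3) hq0) ?_
      linear_combination p 0 * hq4 - p 0 * hp4 - p 1 * hpow
    have hq1eq : q 1 = c * p 1 := by
      rw [hc, div_mul_eq_mul_div, eq_div_iff hp0]
      linear_combination h1
    -- auxiliary invariants
    have h4' : q 1 ^ (e+4) = p 1 ^ (e+4) := by
      rw [hq1eq, mul_pow, hcp, one_mul]
    have h5 : q 0 * q 1 ^ (e+3) = p 0 * p 1 ^ (e+3) := by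
      rw [hq0eq, hq1eq, mul_pow]
      linear_combination (p 0 * p 1 ^ (e+3)) * hcp
    have hq0pow : q 0 ^ (e+3) = c ^ (e+3) * p 0 ^ (e+3) := by
      rw [hq0eq, mul_pow]
    -- q 3 = c * p 3
    have h6 : q 0 ^ (e+3) * q 3 = p 0 ^ (e+3) * p 3 := by
      linear_combination hq2 - hp2 - ((e:ℂ)+5) * h4' - ((e:ℂ)+4) * h5
    have h8 : p 0 ^ (e+3) * (c ^ (e+3) * q 3) = p 0 ^ (e+3) * p 3 := by
      linear_combination h6 - q 3 * hq0pow
    have h9 : c ^ (e+3) * q 3 = p 3 := mul_left_cancel₀ (pow_ne_zero _ hp0) h8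
    have hq3eq : q 3 = c * p 3 := by linear_combination c * h9 - q 3 * hcp
    -- q 2 = c * p 2
    have h10 : q 0 ^ (e+2) * q 1 * q 3 = p 0 ^ (e+2) * p 1 * p 3 := by
      rw [hq0eq, hq1eq, hq3eq, mul_pow]
      linear_combination (p 0 ^ (e+2) * p 1 * p 3) * hcp
    have h11 : ((e:ℂ)+4) * (q 0 ^ (e+3) * q 2) = ((e:ℂ)+4) * (p 0 ^ (e+3) * p 2) := by
      linear_combination hq1 - hp1 - ((e:ℂ)+3) * h10 - h4'
    have h12 : q 0 ^ (e+3) * q 2 = p 0 ^ (e+3) * p 2 := mul_left_cancel₀ he4 h11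
    have h13 : p 0 ^ (e+3) * (c ^ (e+3) * q 2) = p 0 ^ (e+3) * p 2 := by
      linear_combination h12 - q 2 * hq0pow
    have h14 : c ^ (e+3) * q 2 = p 2 := mul_left_cancel₀ (pow_ne_zero _ hp0) h13
    have hq2eq : q 2 = c * p 2 := by linear_combination c * h14 - q 2 * hcp
    refine ⟨c, hcne, ?_⟩
    funext i
    fin_cases i <;> simp only [Pi.smul_apply, smul_eq_mul]
    · exact hq0eq
    · exact hq1eq
    · exact hq2eq
    · exact hq3eq
end

section
/- Let n ≥ 1 and let d₁, …, dₙ and e₁, …, eₙ be positive integers. Define Q(x) = Σ_{j=1}^{n} binom(x − d_j, n) and Q'(x) = Σ_{j=1}^{n} binom(x − e_j, n), where binom(y, n) denotes the polynomial y(y−1)⋯(y−n+1)/n! in the variable y. If Q = Q' as polynomials in x, then the multisets {d₁, …, dₙ} and {e₁, …, eₙ} coincide. -/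
open Polynomial Finset

private lemma delta_term (c : ℚ) (m : ℕ) :
    (∏ k ∈ Finset.range (m + 1), (X - C (c + k))).comp (X + 1)
      - ∏ k ∈ Finset.range (m + 1), (X - C (c + k))
    = C ((m : ℚ) + 1) * ∏ k ∈ Finset.range m, (X - C (c + k)) := by
  rw [Polynomial.prod_comp,
    Finset.prod_range_succ' (fun k => ((X : ℚ[X]) - C (c + k)).comp (X + 1)),
    Finset.prod_range_succ (fun k => ((X : ℚ[X]) - C (c + k)))]
  have h1 : (∏ k ∈ Finset.range m, ((X : ℚ[X]) - C (c + ((k : ℕ) + 1 : ℕ))).comp (X + 1))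
      = ∏ k ∈ Finset.range m, ((X : ℚ[X]) - C (c + k)) := by
    refine Finset.prod_congr rfl fun k _ => ?_
    simp only [sub_comp, X_comp, C_comp]
    push_cast
    simp only [C_add, C_1]
    ring
  rw [h1]
  simp only [sub_comp, X_comp, C_comp, Nat.cast_zero, add_zero, C_add, C_1]
  ring

private lemma levels (n : ℕ) (d e : Fin n → ℕ)
    (h : (∑ j, ∏ k ∈ Finset.range n, (X - C ((d j : ℚ) + k)))
       = ∑ j, ∏ k ∈ Finset.range n, (X - C ((e j : ℚ) + k))) :
    ∀ m, m ≤ n → (∑ j, ∏ k ∈ Finset.range m, (X - C ((d j : ℚ) + k)))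
       = ∑ j, ∏ k ∈ Finset.range m, (X - C ((e j : ℚ) + k)) := by
  have key : ∀ i, (∑ j, ∏ k ∈ Finset.range (n - i), (X - C ((d j : ℚ) + k)))
       = ∑ j, ∏ k ∈ Finset.range (n - i), (X - C ((e j : ℚ) + k)) := by
    intro i
    induction i with
    | zero => simpa using h
    | succ i ih =>
      rcases Nat.eq_zero_or_pos (n - i) with h0 | hpos
      · have h1 : n - (i + 1) = 0 := by omega
        rw [h0] at ih
        rw [h1]
        exact ih
      · obtain ⟨m, hm⟩ : ∃ m, n - i = m + 1 := ⟨n - i - 1, by omega⟩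
        have hm' : n - (i + 1) = m := by omega
        rw [hm] at ih
        rw [hm']
        have hdelta := congrArg (fun p : ℚ[X] => p.comp (X + 1) - p) ih
        simp only [Polynomial.sum_comp] at hdelta
        have hds : ∀ f : Fin n → ℕ,
            (∑ j, (∏ k ∈ Finset.range (m + 1), (X - C ((f j : ℚ) + k))).comp (X + 1))
            - (∑ j, ∏ k ∈ Finset.range (m + 1), (X - C ((f j : ℚ) + k)))
            = C ((m : ℚ) + 1) * ∑ j, ∏ k ∈ Finset.range m, (X - C ((f j : ℚ) + k)) := by
          intro f
          rw [← Finset.sum_sub_distrib, Finset.mul_sum]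
          exact Finset.sum_congr rfl fun j _ => delta_term _ m
        rw [hds d, hds e] at hdelta
        have hC : (C ((m : ℚ) + 1)) ≠ 0 := by
          rw [Ne, Polynomial.C_eq_zero]
          positivity
        exact mul_left_cancel₀ hC hdelta
  intro m hm
  have := key (n - m)
  rwa [Nat.sub_sub_self hm] at this

private lemma sum_rising (n : ℕ) (d e : Fin n → ℕ) (m : ℕ)
    (h : (∑ j, ∏ k ∈ Finset.range m, (X - C ((d j : ℚ) + k)))
       = ∑ j, ∏ k ∈ Finset.range m, (X - C ((e j : ℚ) + k))) :
    ∑ j, ∏ k ∈ Finset.range m, ((d j : ℚ) + k)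
      = ∑ j, ∏ k ∈ Finset.range m, ((e j : ℚ) + k) := by
  have h0 := congrArg (fun p : ℚ[X] => ((-1 : ℚ)) ^ m * Polynomial.eval 0 p) h
  simp only [Polynomial.eval_finset_sum, eval_prod, eval_sub, eval_X, eval_C, zero_sub,
    Finset.mul_sum] at h0
  have hterm : ∀ c : ℚ, (-1 : ℚ) ^ m * ∏ k ∈ Finset.range m, (-(c + (k : ℚ)))
      = ∏ k ∈ Finset.range m, (c + (k : ℚ)) := by
    intro c
    have : ∀ k ∈ Finset.range m, (-(c + (k : ℚ))) = (-1) * (c + k) := by intros; ring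
    rw [Finset.prod_congr rfl this, Finset.prod_mul_distrib, Finset.prod_const, card_range,
      ← mul_assoc, ← mul_pow]
    norm_num
  calc ∑ j, ∏ k ∈ Finset.range m, ((d j : ℚ) + k)
      = ∑ j, (-1 : ℚ) ^ m * ∏ k ∈ Finset.range m, (-((d j : ℚ) + k)) := by
        exact Finset.sum_congr rfl fun j _ => (hterm _).symm
    _ = ∑ j, (-1 : ℚ) ^ m * ∏ k ∈ Finset.range m, (-((e j : ℚ) + k)) := h0
    _ = ∑ j, ∏ k ∈ Finset.range m, ((e j : ℚ) + k) :=
        Finset.sum_congr rfl fun j _ => hterm _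

private lemma powersums (n : ℕ) (d e : Fin n → ℕ)
    (hlev : ∀ m, m ≤ n → ∑ j, ∏ k ∈ Finset.range m, ((d j : ℚ) + k)
      = ∑ j, ∏ k ∈ Finset.range m, ((e j : ℚ) + k)) :
    ∀ m, m ≤ n → ∑ j, ((d j : ℚ)) ^ m = ∑ j, ((e j : ℚ)) ^ m := by
  intro m
  induction m using Nat.strong_induction_on with
  | _ m ih =>
    intro hm
    rcases Nat.eq_zero_or_pos m with rfl | hm0
    · simp
    set R : ℚ[X] := ∏ k ∈ Finset.range m, (X + C (k : ℚ)) with hR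
    have hmonic : R.Monic := monic_prod_of_monic _ _ fun k _ => monic_X_add_C _
    have hdeg : R.natDegree = m := by
      rw [hR, Polynomial.natDegree_prod_of_monic _ _ fun k _ => monic_X_add_C _]
      simp only [Polynomial.natDegree_X_add_C, Finset.sum_const, card_range, smul_eq_mul,
        mul_one]
    have hevalR : ∀ c : ℚ, R.eval c = ∏ k ∈ Finset.range m, (c + k) := by
      intro c; simp [hR, eval_prod]
    set q : ℚ[X] := R - X ^ m with hq
    have hqdeg : q.natDegree < m := by
      rcases eq_or_ne q 0 with h0 | h0
      · simpa [h0] using hm0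
      · have h1 : R.degree = (X ^ m : ℚ[X]).degree := by
          rw [degree_X_pow, Polynomial.degree_eq_natDegree hmonic.ne_zero, hdeg]
        have hlt : q.degree < (X ^ m : ℚ[X]).degree := by
          rw [hq, ← h1]
          exact Polynomial.degree_sub_lt h1 hmonic.ne_zero (by simp [hmonic.leadingCoeff])
        rw [degree_X_pow] at hlt
        exact (Polynomial.natDegree_lt_iff_degree_lt h0).mpr hlt
    have hq_eval : ∀ c : ℚ, c ^ m = (∏ k ∈ Finset.range m, (c + k)) - q.eval c := by
      intro c
      rw [hq]
      simp [hevalR c]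
    have hsum_low : ∀ f : Fin n → ℕ,
        ∑ j, q.eval ((f j : ℚ)) = ∑ i ∈ Finset.range m, q.coeff i * ∑ j, ((f j : ℚ)) ^ i := by
      intro f
      calc ∑ j, q.eval ((f j : ℚ))
          = ∑ j, ∑ i ∈ Finset.range m, q.coeff i * ((f j : ℚ)) ^ i :=
            Finset.sum_congr rfl fun j _ => Polynomial.eval_eq_sum_range' hqdeg _
        _ = ∑ i ∈ Finset.range m, q.coeff i * ∑ j, ((f j : ℚ)) ^ i := by
            rw [Finset.sum_comm]
            exact Finset.sum_congr rfl fun i _ => by rw [Finset.mul_sum]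
    have hsplit : ∀ f : Fin n → ℕ, ∑ j, ((f j : ℚ)) ^ m
        = (∑ j, ∏ k ∈ Finset.range m, ((f j : ℚ) + k)) - ∑ j, q.eval ((f j : ℚ)) := by
      intro f
      rw [← Finset.sum_sub_distrib]
      exact Finset.sum_congr rfl fun j _ => hq_eval _
    rw [hsplit d, hsplit e, hlev m hm, hsum_low d, hsum_low e]
    congr 1
    exact Finset.sum_congr rfl fun i hi =>
      congrArg _ (ih i (Finset.mem_range.mp hi) (le_trans (Finset.mem_range.mp hi).le hm))

private lemma esymm_eq (n : ℕ) (d e : Fin n → ℕ)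
    (hps : ∀ m, m ≤ n → ∑ j, ((d j : ℚ)) ^ m = ∑ j, ((e j : ℚ)) ^ m) :
    ∀ k, k ≤ n → (Multiset.map (fun j => (d j : ℚ)) Finset.univ.val).esymm k
           = (Multiset.map (fun j => (e j : ℚ)) Finset.univ.val).esymm k := by
  intro k
  induction k using Nat.strong_induction_on with
  | _ k ih =>
    intro hk
    rcases Nat.eq_zero_or_pos k with rfl | hk0
    · simp [Multiset.esymm]
    have hN := MvPolynomial.psum_eq_mul_esymm_sub_sum (Fin n) ℚ k hk0
    have haps : ∀ (f : Fin n → ℕ) (m : ℕ),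
        MvPolynomial.aeval (fun j => (f j : ℚ)) (MvPolynomial.psum (Fin n) ℚ m)
          = ∑ j, ((f j : ℚ)) ^ m := by
      intro f m
      simp [MvPolynomial.psum]
    have hd := congrArg (MvPolynomial.aeval (fun j => (d j : ℚ))) hN
    have he := congrArg (MvPolynomial.aeval (fun j => (e j : ℚ))) hN
    simp only [map_sub, map_mul, map_pow, map_sum, map_neg, map_one, map_natCast, haps,
      MvPolynomial.aeval_esymm_eq_multiset_esymm] at hd he
    have hsame :
        (∑ a ∈ Finset.HasAntidiagonal.antidiagonal k with a.1 ∈ Set.Ioo 0 k,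
          (-1 : ℚ) ^ a.1 * (Multiset.map (fun j => (d j : ℚ)) Finset.univ.val).esymm a.1
            * ∑ j, ((d j : ℚ)) ^ a.2)
        = ∑ a ∈ Finset.HasAntidiagonal.antidiagonal k with a.1 ∈ Set.Ioo 0 k,
          (-1 : ℚ) ^ a.1 * (Multiset.map (fun j => (e j : ℚ)) Finset.univ.val).esymm a.1
            * ∑ j, ((e j : ℚ)) ^ a.2 := by
      refine Finset.sum_congr rfl fun a ha => ?_
      rw [Finset.mem_filter, Finset.HasAntidiagonal.mem_antidiagonal] at ha
      obtain ⟨h1, h2⟩ := ha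
      obtain ⟨h3, h4⟩ := h2
      rw [ih a.1 h4 (le_trans h4.le hk), hps a.2 (by omega)]
    have hkey : (-1 : ℚ) ^ (k + 1) * (k : ℚ)
          * (Multiset.map (fun j => (d j : ℚ)) Finset.univ.val).esymm k
        = (-1 : ℚ) ^ (k + 1) * (k : ℚ)
          * (Multiset.map (fun j => (e j : ℚ)) Finset.univ.val).esymm k := by
      have h5 := hps k hk
      linarith [hd, he, hsame]
    have hc : ((-1 : ℚ) ^ (k + 1) * (k : ℚ)) ≠ 0 :=
      mul_ne_zero (pow_ne_zero _ (by norm_num)) (Nat.cast_ne_zero.mpr hk0.ne')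
    exact mul_left_cancel₀ hc hkey

private lemma multiset_eq (n : ℕ) (d e : Fin n → ℕ)
    (hes : ∀ k, k ≤ n → (Multiset.map (fun j => (d j : ℚ)) Finset.univ.val).esymm k
           = (Multiset.map (fun j => (e j : ℚ)) Finset.univ.val).esymm k) :
    Multiset.map d Finset.univ.val = Multiset.map e Finset.univ.val := by
  set sd := Multiset.map (fun j => (d j : ℚ)) Finset.univ.val with hsd
  set se := Multiset.map (fun j => (e j : ℚ)) Finset.univ.val with hse
  have hcd : Multiset.card sd = n := by simp [hsd]
  have hce : Multiset.card se = n := by simp [hse]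
  have hprod : (sd.map fun a => X - C a).prod = (se.map fun a => X - C a).prod := by
    apply Polynomial.ext
    intro k
    rcases le_or_gt k n with hk | hk
    · rw [Multiset.prod_X_sub_C_coeff sd (by rw [hcd]; exact hk),
        Multiset.prod_X_sub_C_coeff se (by rw [hce]; exact hk), hcd, hce,
        hes (n - k) (Nat.sub_le _ _)]
    · rw [Polynomial.coeff_eq_zero_of_natDegree_lt, Polynomial.coeff_eq_zero_of_natDegree_lt] <;>
        · rw [Polynomial.natDegree_multiset_prod_X_sub_C_eq_card]
          simp only [hcd, hce]
          exact hk
  have hroots := congrArg Polynomial.roots hprod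
  rw [Polynomial.roots_multiset_prod_X_sub_C, Polynomial.roots_multiset_prod_X_sub_C] at hroots
  have hmap : Multiset.map (fun x : ℕ => (x : ℚ)) (Multiset.map d Finset.univ.val)
      = Multiset.map (fun x : ℕ => (x : ℚ)) (Multiset.map e Finset.univ.val) := by
    rw [Multiset.map_map, Multiset.map_map]
    exact hroots
  exact Multiset.map_injective
    (Nat.cast_injective : Function.Injective (Nat.cast : ℕ → ℚ)) hmap

private lemma exists_perm_of_multiset_eq {n : ℕ} (d e : Fin n → ℕ)
    (h : Multiset.map d Finset.univ.val = Multiset.map e Finset.univ.val) :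
    ∃ σ : Equiv.Perm (Fin n), ∀ i, e i = d (σ i) := by
  rw [Fin.univ_val_map, Fin.univ_val_map] at h
  have hl : (List.ofFn d).Perm (List.ofFn e) := Multiset.coe_eq_coe.mp h
  have h1 : (List.ofFn (d ∘ Tuple.sort d)).Perm (List.ofFn (e ∘ Tuple.sort e)) :=
    ((Tuple.sort d).ofFn_comp_perm d).trans (hl.trans ((Tuple.sort e).ofFn_comp_perm e).symm)
  have h2 : List.ofFn (d ∘ Tuple.sort d) = List.ofFn (e ∘ Tuple.sort e) :=
    List.Perm.eq_of_sortedLE (Tuple.monotone_sort d).sortedLE_ofFn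
      (Tuple.monotone_sort e).sortedLE_ofFn h1
  have h3 : d ∘ Tuple.sort d = e ∘ Tuple.sort e := List.ofFn_injective h2
  refine ⟨(Tuple.sort e).symm.trans (Tuple.sort d), fun i => ?_⟩
  have h4 := congrFun h3 ((Tuple.sort e).symm i)
  simp only [Function.comp_apply, Equiv.apply_symm_apply] at h4
  simpa [Equiv.trans_apply] using h4.symm

/-- If `Q(x) = Σ_j binom(x − d_j, n)` and `Q'(x) = Σ_j binom(x − e_j, n)` agree as
polynomials, where the `d_j`, `e_j` are positive integers, then the multisets
`{d_j}` and `{e_j}` coincide. -/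
theorem stmt10 (n : ℕ) (hn : 1 ≤ n) (d e : Fin n → ℕ)
    (hd : ∀ i, 0 < d i) (he : ∀ i, 0 < e i)
    (h : (∑ j, (Polynomial.C ((n.factorial : ℚ)⁻¹)) *
            ∏ k ∈ Finset.range n, (Polynomial.X - Polynomial.C ((d j : ℚ) + k)))
       = ∑ j, (Polynomial.C ((n.factorial : ℚ)⁻¹)) *
            ∏ k ∈ Finset.range n, (Polynomial.X - Polynomial.C ((e j : ℚ) + k))) :
    ∃ σ : Equiv.Perm (Fin n), ∀ i, e i = d (σ i) := by
  rw [← Finset.mul_sum, ← Finset.mul_sum] at h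
  have hC : (Polynomial.C ((n.factorial : ℚ)⁻¹)) ≠ 0 := by
    rw [Ne, Polynomial.C_eq_zero]
    exact inv_ne_zero (Nat.cast_ne_zero.mpr n.factorial_ne_zero)
  have h0 := mul_left_cancel₀ hC h
  exact exists_perm_of_multiset_eq d e
    (multiset_eq n d e (esymm_eq n d e (powersums n d e
      (fun m hm => sum_rising n d e m (levels n d e h0 m hm)))))
end

section
/- Let Δ₃ = y²z² − 4xz³ − 4y³w + 18xyzw − 27x²w² ∈ ℂ[x,y,z,w]. For every point p = (α, β, γ, δ) ∈ ℂ⁴ outside a proper Zariski-closed subset, all solutions (x,y,z,w) ∈ ℂ⁴ of the system (∂Δ₃/∂x, ∂Δ₃/∂y, ∂Δ₃/∂z, ∂Δ₃/∂w) = (α, β, γ, δ) are pairwise proportional; that is, the gradient map of Δ₃ is a birational self-map of ℙ³ (degree one onto its image, which is dense). -/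
open MvPolynomial

/-- The discriminant quartic `Δ₃ = 0` is homaloidal: outside a proper Zariski-closed
subset of `ℂ⁴` (the zero set of some nonzero polynomial `g`), all solutions of
`grad Δ₃ = (α,β,γ,δ)` are pairwise proportional, i.e. the gradient map of `Δ₃` is a
birational self-map of `ℙ³`. -/
theorem stmt15 (Δ : MvPolynomial (Fin 4) ℂ)
    (hΔ : Δ = X 1 ^ 2 * X 2 ^ 2 - 4 * X 0 * X 2 ^ 3 - 4 * X 1 ^ 3 * X 3 +
        18 * X 0 * X 1 * X 2 * X 3 - 27 * X 0 ^ 2 * X 3 ^ 2) :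
    ∃ g : MvPolynomial (Fin 4) ℂ, g ≠ 0 ∧
      ∀ v : Fin 4 → ℂ, eval v g ≠ 0 →
        ∀ p q : Fin 4 → ℂ,
          (∀ i : Fin 4, eval p (pderiv i Δ) = v i) →
          (∀ i : Fin 4, eval q (pderiv i Δ) = v i) →
          ∃ c : ℂ, c ≠ 0 ∧ q = c • p := by
  -- explicit formulas for the four partial derivatives
  have hder : ∀ r : Fin 4 → ℂ,
      eval r (pderiv 0 Δ) = -4*(r 2)^3 + 18*(r 1)*(r 2)*(r 3) - 54*(r 0)*(r 3)^2 ∧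
      eval r (pderiv 1 Δ) = 2*(r 1)*(r 2)^2 - 12*(r 1)^2*(r 3) + 18*(r 0)*(r 2)*(r 3) ∧
      eval r (pderiv 2 Δ) = 2*(r 1)^2*(r 2) - 12*(r 0)*(r 2)^2 + 18*(r 0)*(r 1)*(r 3) ∧
      eval r (pderiv 3 Δ) = -4*(r 1)^3 + 18*(r 0)*(r 1)*(r 2) - 54*(r 0)^2*(r 3) := by
    intro r
    subst hΔ
    refine ⟨?_, ?_, ?_, ?_⟩ <;>
    · simp [(map_ofNat (C : ℂ →+* MvPolynomial (Fin 4) ℂ) 4).symm,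
        (map_ofNat (C : ℂ →+* MvPolynomial (Fin 4) ℂ) 18).symm,
        (map_ofNat (C : ℂ →+* MvPolynomial (Fin 4) ℂ) 27).symm,
        pderiv_X, pderiv_C, Pi.single_apply]
      ring
  refine ⟨2*(X 2)^3 - 3*(X 1)*(X 2)*(X 3) + (X 0)*(X 3)^2, ?_, ?_⟩
  · -- g ≠ 0 : evaluate at (1,0,0,1)
    intro h
    have h1 := congrArg (eval ![(1:ℂ),0,0,1]) h
    simp at h1
  · intro v hv p q hp hq
    have hgv : eval v (2*(X 2)^3 - 3*(X 1)*(X 2)*(X 3) + (X 0)*(X 3)^2)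
        = 2*(v 2)^3 - 3*(v 1)*(v 2)*(v 3) + (v 0)*(v 3)^2 := by simp
    rw [hgv] at hv
    obtain ⟨hp0, hp1, hp2, hp3⟩ := hder p
    obtain ⟨hq0, hq1, hq2, hq3⟩ := hder q
    rw [hp 0] at hp0; rw [hp 1] at hp1; rw [hp 2] at hp2; rw [hp 3] at hp3
    rw [hq 0] at hq0; rw [hq 1] at hq1; rw [hq 2] at hq2; rw [hq 3] at hq3
    set a := p 0; set b := p 1; set c := p 2; set d := p 3
    set a' := q 0; set b' := q 1; set c' := q 2; set d' := q 3
    set L : ℂ := -216 * (b^2*c^2 - 4*a*c^3 - 4*b^3*d + 18*a*b*c*d - 27*a^2*d^2)^2 with hLdef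
    set M : ℂ := -216 * (b'^2*c'^2 - 4*a'*c'^3 - 4*b'^3*d' + 18*a'*b'*c'*d' - 27*a'^2*d'^2)^2
      with hMdef
    -- the inverse gradient map identities
    have hL0 : 2*(v 2)^3 - 3*(v 1)*(v 2)*(v 3) + (v 0)*(v 3)^2 = L * a := by
      rw [hp0, hp1, hp2, hp3, hLdef]; ring
    have hL1 : -3*(v 1)*(v 2)^2 + 6*(v 1)^2*(v 3) - 3*(v 0)*(v 2)*(v 3) = L * b := by
      rw [hp0, hp1, hp2, hp3, hLdef]; ring
    have hL2 : -3*(v 1)^2*(v 2) + 6*(v 0)*(v 2)^2 - 3*(v 0)*(v 1)*(v 3) = L * c := by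
      rw [hp0, hp1, hp2, hp3, hLdef]; ring
    have hL3 : 2*(v 1)^3 - 3*(v 0)*(v 1)*(v 2) + (v 0)^2*(v 3) = L * d := by
      rw [hp0, hp1, hp2, hp3, hLdef]; ring
    have hM0 : 2*(v 2)^3 - 3*(v 1)*(v 2)*(v 3) + (v 0)*(v 3)^2 = M * a' := by
      rw [hq0, hq1, hq2, hq3, hMdef]; ring
    have hM1 : -3*(v 1)*(v 2)^2 + 6*(v 1)^2*(v 3) - 3*(v 0)*(v 2)*(v 3) = M * b' := by
      rw [hq0, hq1, hq2, hq3, hMdef]; ring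
    have hM2 : -3*(v 1)^2*(v 2) + 6*(v 0)*(v 2)^2 - 3*(v 0)*(v 1)*(v 3) = M * c' := by
      rw [hq0, hq1, hq2, hq3, hMdef]; ring
    have hM3 : 2*(v 1)^3 - 3*(v 0)*(v 1)*(v 2) + (v 0)^2*(v 3) = M * d' := by
      rw [hq0, hq1, hq2, hq3, hMdef]; ring
    have hLne : L ≠ 0 := fun h => hv (by rw [hL0, h, zero_mul])
    have hMne : M ≠ 0 := fun h => hv (by rw [hM0, h, zero_mul])
    refine ⟨L / M, div_ne_zero hLne hMne, ?_⟩
    funext i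
    have key : ∀ j : Fin 4, M * q j = L * p j := by
      intro j
      fin_cases j
      · exact hM0.symm.trans hL0
      · exact hM1.symm.trans hL1
      · exact hM2.symm.trans hL2
      · exact hM3.symm.trans hL3
    have hkey := key i
    have : q i = L / M * p i := by
      rw [div_mul_eq_mul_div, eq_div_iff hMne]
      linear_combination hkey
    simpa using this
end
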